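/- Let c : ℝ → Quaternion ℝ be a curve with c(0) = 1, taking values in the unit quaternions (‖c(t)‖ = 1 for all t), and having derivative ξ at 0 (HasDerivAt c ξ 0). Then the curve t ↦ c(t) · i · star(c(t)) has derivative ξ·i − i·ξ = [ξ, i] at 0. (This is the computation of the tangent map τ_* of the embedding τ : ℂP¹ → Im ℍ, qU₁ ↦ q i q⁻¹, at the base point: τ_*(ξ x₀) = [ξ, i].) -/

import Mathlib

/-- The imaginary unit quaternion `i`. -/
def qI : Quaternion ℝ := ⟨0, 1, 0, 0⟩

instance : StarModule ℝ (Quaternion ℝ) :=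
  ⟨fun r q => by ext <;> simp⟩

/-- Tangent map of the embedding `τ : ℂP¹ → Im ℍ`, `qU₁ ↦ q i q⁻¹`, at the base
point: if `c` is a curve of unit quaternions with `c 0 = 1` and derivative `ξ`
at `0`, then `t ↦ c t · i · star (c t)` has derivative `ξ i - i ξ = [ξ, i]`
at `0`. -/
theorem tangent_map_of_conjugation_embedding
    (c : ℝ → Quaternion ℝ) (ξ : Quaternion ℝ)
    (hc0 : c 0 = 1) (hunit : ∀ t : ℝ, ‖c t‖ = 1)
    (hder : HasDerivAt c ξ 0) :
    HasDerivAt (fun t : ℝ => c t * qI * star (c t)) (ξ * qI - qI * ξ) 0 := by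
  have hstar : HasDerivAt (fun t => star (c t)) (star ξ) 0 := hder.star
  have hns : HasDerivAt (fun t => c t * star (c t)) (ξ * star (c 0) + c 0 * star ξ) 0 :=
    hder.mul hstar
  have hconst : (fun t => c t * star (c t)) = fun _ : ℝ => (1 : Quaternion ℝ) := by
    funext t
    have : (‖c t‖ : ℝ) ^ 2 = 1 := by rw [hunit]; ring
    have h2 : Quaternion.normSq (c t) = 1 := by
      rw [sq, ← Quaternion.normSq_eq_norm_mul_self] at this
      exact_mod_cast this
    have := Quaternion.self_mul_star (c t)
    rw [this, h2]; simp
  have hzero : ξ * star (c 0) + c 0 * star ξ = 0 := by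
    have h0 : HasDerivAt (fun _ : ℝ => (1 : Quaternion ℝ)) 0 0 := hasDerivAt_const 0 1
    rw [hconst] at hns
    exact hns.unique h0
  have hsx : star ξ = -ξ := by
    rw [hc0] at hzero
    simp at hzero
    exact eq_neg_of_add_eq_zero_right hzero
  have := (hder.mul_const qI).mul hstar
  rw [hc0, hsx] at this
  convert this using 1
  all_goals first | rfl | (simp; abel)
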